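/- If f : E → [0,∞] is concave, then both f^Γ and f_Γ are convex. Likewise, if f is convex, then both f^Γ and f_Γ are concave. -/

import Mathlib

open Set
open scoped ENNReal RealInnerProductSpace

noncomputable section

variable {E : Type*} [NormedAddCommGroup E] [InnerProductSpace ℝ E] [FiniteDimensional ℝ E]

/-- The perspective function `f^p(y,v) = v·f(y/v)` (for `v > 0`). -/
def persp (f : E → ℝ≥0∞) (y : E) (v : ℝ) : ℝ≥0∞ := ENNReal.ofReal v * f (v⁻¹ • y)

/-- The epigraph `epi f = {(x,u) ∈ E × ℝ₊₊ : f(x) ≤ u}`. -/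
def epiSet (f : E → ℝ≥0∞) : Set (E × ℝ) :=
  {p : E × ℝ | 0 < p.2 ∧ f p.1 ≤ ENNReal.ofReal p.2}

/-- The hypograph `hypo f = {(x,u) ∈ E × ℝ₊₊ : f(x) ≥ u}`. -/
def hypoSet (f : E → ℝ≥0∞) : Set (E × ℝ) :=
  {p : E × ℝ | 0 < p.2 ∧ ENNReal.ofReal p.2 ≤ f p.1}

/-- The upper radial transformation `f^Γ(y) = sup{v > 0 : v·f(y/v) ≤ 1}` (`sup ∅ = 0`). -/
def radSup (f : E → ℝ≥0∞) (y : E) : ℝ≥0∞ :=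
  ⨆ (v : ℝ) (_ : 0 < v) (_ : persp f y v ≤ 1), ENNReal.ofReal v

/-- The lower radial transformation `f_Γ(y) = inf{v > 0 : v·f(y/v) ≥ 1}` (`inf ∅ = ∞`). -/
def radInf (f : E → ℝ≥0∞) (y : E) : ℝ≥0∞ :=
  ⨅ (v : ℝ) (_ : 0 < v) (_ : 1 ≤ persp f y v), ENNReal.ofReal v

lemma aux_combo_pos {a b v₁ v₂ : ℝ} (ha : 0 ≤ a) (hb : 0 ≤ b) (hab : a + b = 1)
    (h₁ : 0 < v₁) (h₂ : 0 < v₂) : 0 < a * v₁ + b * v₂ := by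
  rcases ha.eq_or_lt with h | h
  · have hb1 : b = 1 := by linarith
    simp [← h, hb1, h₂]
  · nlinarith

lemma aux_combo_lt {a b w₁ w₂ w₁' w₂' : ℝ} (ha : 0 ≤ a) (hb : 0 ≤ b) (hab : a + b = 1)
    (h₁ : w₁ < w₁') (h₂ : w₂ < w₂') : a * w₁ + b * w₂ < a * w₁' + b * w₂' := by
  rcases ha.eq_or_lt with h | h
  · have hb1 : b = 1 := by linarith
    simp [← h, hb1, h₂]
  · rcases hb.eq_or_lt with h' | h'
    · have ha1 : a = 1 := by linarith
      simp [← h', ha1, h₁]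
    · nlinarith

lemma convex_inv {C : Set (E × ℝ)} (hC : Convex ℝ C) :
    Convex ℝ {p : E × ℝ | 0 < p.2 ∧ ((p.2)⁻¹ • p.1, (p.2)⁻¹) ∈ C} := by
  rintro ⟨y₁, v₁⟩ ⟨h₁, m₁⟩ ⟨y₂, v₂⟩ ⟨h₂, m₂⟩ a b ha hb hab
  have hv : 0 < a * v₁ + b * v₂ := aux_combo_pos ha hb hab h₁ h₂
  simp only [mem_setOf_eq, Prod.smul_mk, Prod.mk_add_mk, smul_eq_mul]
  refine ⟨hv, ?_⟩
  have hα : (0:ℝ) ≤ a * v₁ / (a * v₁ + b * v₂) := by positivity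
  have hβ : (0:ℝ) ≤ b * v₂ / (a * v₁ + b * v₂) := by positivity
  have hαβ : a * v₁ / (a * v₁ + b * v₂) + b * v₂ / (a * v₁ + b * v₂) = 1 := by
    field_simp
  have key := hC m₁ m₂ hα hβ hαβ
  have heq : (a * v₁ / (a * v₁ + b * v₂)) • (((v₁:ℝ)⁻¹ • y₁, (v₁:ℝ)⁻¹) : E × ℝ)
      + (b * v₂ / (a * v₁ + b * v₂)) • (((v₂:ℝ)⁻¹ • y₂, (v₂:ℝ)⁻¹) : E × ℝ)
      = (((a * v₁ + b * v₂)⁻¹ • (a • y₁ + b • y₂) : E), (a * v₁ + b * v₂)⁻¹) := by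
    have hne : a * v₁ + b * v₂ ≠ 0 := ne_of_gt hv
    simp only [Prod.smul_mk, Prod.mk_add_mk, smul_eq_mul, Prod.mk.injEq]
    constructor
    · simp only [smul_smul, smul_add]
      congr 1 <;> congr 1 <;> field_simp <;> ring
    · have h1ne : v₁ ≠ 0 := ne_of_gt h₁
      have h2ne : v₂ ≠ 0 := ne_of_gt h₂
      have key2 : a * v₁ / (a * v₁ + b * v₂) * v₁⁻¹ + b * v₂ / (a * v₁ + b * v₂) * v₂⁻¹
          = (a + b) / (a * v₁ + b * v₂) := by
        field_simp
      rw [key2, hab, one_div]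
  rw [heq] at key
  exact key

lemma convex_strictHypo {f : E → ℝ≥0∞} (hf : Convex ℝ (hypoSet f)) :
    Convex ℝ {p : E × ℝ | 0 < p.2 ∧ ENNReal.ofReal p.2 < f p.1} := by
  rintro ⟨x₁, w₁⟩ ⟨h₁, m₁⟩ ⟨x₂, w₂⟩ ⟨h₂, m₂⟩ a b ha hb hab
  obtain ⟨w₁', hlt₁, hle₁⟩ : ∃ w', w₁ < w' ∧ ENNReal.ofReal w' ≤ f x₁ := by
    rcases eq_or_ne (f x₁) ⊤ with h | h
    · exact ⟨w₁ + 1, by linarith, by simp [h]⟩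
    · exact ⟨(f x₁).toReal, (ENNReal.ofReal_lt_iff_lt_toReal h₁.le h).mp m₁,
        le_of_eq (ENNReal.ofReal_toReal h)⟩
  obtain ⟨w₂', hlt₂, hle₂⟩ : ∃ w', w₂ < w' ∧ ENNReal.ofReal w' ≤ f x₂ := by
    rcases eq_or_ne (f x₂) ⊤ with h | h
    · exact ⟨w₂ + 1, by linarith, by simp [h]⟩
    · exact ⟨(f x₂).toReal, (ENNReal.ofReal_lt_iff_lt_toReal h₂.le h).mp m₂,
        le_of_eq (ENNReal.ofReal_toReal h)⟩
  have p₁ : ((x₁, w₁') : E × ℝ) ∈ hypoSet f := ⟨h₁.trans hlt₁, hle₁⟩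
  have p₂ : ((x₂, w₂') : E × ℝ) ∈ hypoSet f := ⟨h₂.trans hlt₂, hle₂⟩
  have key := hf p₁ p₂ ha hb hab
  simp only [hypoSet, mem_setOf_eq, Prod.smul_mk, Prod.mk_add_mk, smul_eq_mul] at key
  simp only [mem_setOf_eq, Prod.smul_mk, Prod.mk_add_mk, smul_eq_mul]
  refine ⟨aux_combo_pos ha hb hab h₁ h₂, ?_⟩
  calc ENNReal.ofReal (a * w₁ + b * w₂) < ENNReal.ofReal (a * w₁' + b * w₂') := by
        rw [ENNReal.ofReal_lt_ofReal_iff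
          (aux_combo_pos ha hb hab (h₁.trans hlt₁) (h₂.trans hlt₂))]
        exact aux_combo_lt ha hb hab hlt₁ hlt₂
    _ ≤ f (a • x₁ + b • x₂) := key.2

lemma convex_strictEpi {f : E → ℝ≥0∞} (hf : Convex ℝ (epiSet f)) :
    Convex ℝ {p : E × ℝ | 0 < p.2 ∧ f p.1 < ENNReal.ofReal p.2} := by
  rintro ⟨x₁, w₁⟩ ⟨h₁, m₁⟩ ⟨x₂, w₂⟩ ⟨h₂, m₂⟩ a b ha hb hab
  obtain ⟨w₁', hpos₁, hlt₁, hle₁⟩ :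
      ∃ w', 0 < w' ∧ w' < w₁ ∧ f x₁ ≤ ENNReal.ofReal w' := by
    have hne : f x₁ ≠ ⊤ := ne_top_of_lt m₁
    refine ⟨max (f x₁).toReal (w₁ / 2), lt_max_of_lt_right (by linarith), ?_, ?_⟩
    · exact max_lt ((ENNReal.lt_ofReal_iff_toReal_lt hne).mp m₁) (by linarith)
    · calc f x₁ = ENNReal.ofReal (f x₁).toReal := (ENNReal.ofReal_toReal hne).symm
        _ ≤ _ := ENNReal.ofReal_le_ofReal (le_max_left _ _)
  obtain ⟨w₂', hpos₂, hlt₂, hle₂⟩ :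
      ∃ w', 0 < w' ∧ w' < w₂ ∧ f x₂ ≤ ENNReal.ofReal w' := by
    have hne : f x₂ ≠ ⊤ := ne_top_of_lt m₂
    refine ⟨max (f x₂).toReal (w₂ / 2), lt_max_of_lt_right (by linarith), ?_, ?_⟩
    · exact max_lt ((ENNReal.lt_ofReal_iff_toReal_lt hne).mp m₂) (by linarith)
    · calc f x₂ = ENNReal.ofReal (f x₂).toReal := (ENNReal.ofReal_toReal hne).symm
        _ ≤ _ := ENNReal.ofReal_le_ofReal (le_max_left _ _)
  have p₁ : ((x₁, w₁') : E × ℝ) ∈ epiSet f := ⟨hpos₁, hle₁⟩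
  have p₂ : ((x₂, w₂') : E × ℝ) ∈ epiSet f := ⟨hpos₂, hle₂⟩
  have key := hf p₁ p₂ ha hb hab
  simp only [epiSet, mem_setOf_eq, Prod.smul_mk, Prod.mk_add_mk, smul_eq_mul] at key
  simp only [mem_setOf_eq, Prod.smul_mk, Prod.mk_add_mk, smul_eq_mul]
  refine ⟨aux_combo_pos ha hb hab h₁ h₂, ?_⟩
  calc f (a • x₁ + b • x₂) ≤ ENNReal.ofReal (a * w₁' + b * w₂') := key.2
    _ < ENNReal.ofReal (a * w₁ + b * w₂) := by
        rw [ENNReal.ofReal_lt_ofReal_iff (aux_combo_pos ha hb hab h₁ h₂)]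
        exact aux_combo_lt ha hb hab hlt₁ hlt₂

section PerspIff

variable {f : E → ℝ≥0∞} {y : E} {v : ℝ}

lemma ofReal_pos_ne {v : ℝ} (hv : 0 < v) :
    ENNReal.ofReal v ≠ 0 ∧ ENNReal.ofReal v ≠ ⊤ :=
  ⟨(ENNReal.ofReal_pos.mpr hv).ne', ENNReal.ofReal_ne_top⟩

lemma one_le_persp_iff (hv : 0 < v) :
    1 ≤ persp f y v ↔ ENNReal.ofReal v⁻¹ ≤ f (v⁻¹ • y) := by
  obtain ⟨h0, ht⟩ := ofReal_pos_ne hv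
  rw [persp, ENNReal.ofReal_inv_of_pos hv, ← ENNReal.mul_inv_cancel h0 ht,
    ENNReal.mul_le_mul_iff_right h0 ht]

lemma one_lt_persp_iff (hv : 0 < v) :
    1 < persp f y v ↔ ENNReal.ofReal v⁻¹ < f (v⁻¹ • y) := by
  obtain ⟨h0, ht⟩ := ofReal_pos_ne hv
  rw [persp, ENNReal.ofReal_inv_of_pos hv, ← ENNReal.mul_inv_cancel h0 ht,
    ENNReal.mul_lt_mul_iff_right h0 ht]

lemma persp_le_one_iff (hv : 0 < v) :
    persp f y v ≤ 1 ↔ f (v⁻¹ • y) ≤ ENNReal.ofReal v⁻¹ := by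
  obtain ⟨h0, ht⟩ := ofReal_pos_ne hv
  rw [persp, ENNReal.ofReal_inv_of_pos hv, ← ENNReal.mul_inv_cancel h0 ht,
    ENNReal.mul_le_mul_iff_right h0 ht]

lemma persp_lt_one_iff (hv : 0 < v) :
    persp f y v < 1 ↔ f (v⁻¹ • y) < ENNReal.ofReal v⁻¹ := by
  obtain ⟨h0, ht⟩ := ofReal_pos_ne hv
  rw [persp, ENNReal.ofReal_inv_of_pos hv, ← ENNReal.mul_inv_cancel h0 ht,
    ENNReal.mul_lt_mul_iff_right h0 ht]

end PerspIff

lemma convex_S_ge {f : E → ℝ≥0∞} (hf : Convex ℝ (hypoSet f)) :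
    Convex ℝ {p : E × ℝ | 0 < p.2 ∧ 1 ≤ persp f p.1 p.2} := by
  have heq : {p : E × ℝ | 0 < p.2 ∧ 1 ≤ persp f p.1 p.2}
      = {p : E × ℝ | 0 < p.2 ∧ ((p.2)⁻¹ • p.1, (p.2)⁻¹) ∈ hypoSet f} := by
    ext ⟨y, v⟩
    simp only [mem_setOf_eq, hypoSet]
    exact ⟨fun ⟨hv, h⟩ => ⟨hv, inv_pos.mpr hv, (one_le_persp_iff hv).mp h⟩,
           fun ⟨hv, h⟩ => ⟨hv, (one_le_persp_iff hv).mpr h.2⟩⟩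
  rw [heq]; exact convex_inv hf

lemma convex_S_gt {f : E → ℝ≥0∞} (hf : Convex ℝ (hypoSet f)) :
    Convex ℝ {p : E × ℝ | 0 < p.2 ∧ 1 < persp f p.1 p.2} := by
  have heq : {p : E × ℝ | 0 < p.2 ∧ 1 < persp f p.1 p.2}
      = {p : E × ℝ | 0 < p.2 ∧
          ((p.2)⁻¹ • p.1, (p.2)⁻¹) ∈ {q : E × ℝ | 0 < q.2 ∧ ENNReal.ofReal q.2 < f q.1}} := by
    ext ⟨y, v⟩
    simp only [mem_setOf_eq]
    exact ⟨fun ⟨hv, h⟩ => ⟨hv, inv_pos.mpr hv, (one_lt_persp_iff hv).mp h⟩,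
           fun ⟨hv, h⟩ => ⟨hv, (one_lt_persp_iff hv).mpr h.2⟩⟩
  rw [heq]; exact convex_inv (convex_strictHypo hf)

lemma convex_S_le {f : E → ℝ≥0∞} (hf : Convex ℝ (epiSet f)) :
    Convex ℝ {p : E × ℝ | 0 < p.2 ∧ persp f p.1 p.2 ≤ 1} := by
  have heq : {p : E × ℝ | 0 < p.2 ∧ persp f p.1 p.2 ≤ 1}
      = {p : E × ℝ | 0 < p.2 ∧ ((p.2)⁻¹ • p.1, (p.2)⁻¹) ∈ epiSet f} := by
    ext ⟨y, v⟩
    simp only [mem_setOf_eq, epiSet]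
    exact ⟨fun ⟨hv, h⟩ => ⟨hv, inv_pos.mpr hv, (persp_le_one_iff hv).mp h⟩,
           fun ⟨hv, h⟩ => ⟨hv, (persp_le_one_iff hv).mpr h.2⟩⟩
  rw [heq]; exact convex_inv hf

lemma convex_S_lt {f : E → ℝ≥0∞} (hf : Convex ℝ (epiSet f)) :
    Convex ℝ {p : E × ℝ | 0 < p.2 ∧ persp f p.1 p.2 < 1} := by
  have heq : {p : E × ℝ | 0 < p.2 ∧ persp f p.1 p.2 < 1}
      = {p : E × ℝ | 0 < p.2 ∧
          ((p.2)⁻¹ • p.1, (p.2)⁻¹) ∈ {q : E × ℝ | 0 < q.2 ∧ f q.1 < ENNReal.ofReal q.2}} := by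
    ext ⟨y, v⟩
    simp only [mem_setOf_eq]
    exact ⟨fun ⟨hv, h⟩ => ⟨hv, inv_pos.mpr hv, (persp_lt_one_iff hv).mp h⟩,
           fun ⟨hv, h⟩ => ⟨hv, (persp_lt_one_iff hv).mpr h.2⟩⟩
  rw [heq]; exact convex_inv (convex_strictEpi hf)

lemma radSup_le_iff {f : E → ℝ≥0∞} {y : E} {u : ℝ} (hu : 0 < u) :
    radSup f y ≤ ENNReal.ofReal u ↔ ∀ v, u < v → 1 < persp f y v := by
  simp only [radSup, iSup_le_iff]
  constructor
  · intro h v hv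
    by_contra hc
    push_neg at hc
    have := h v (hu.trans hv) hc
    rw [ENNReal.ofReal_le_ofReal_iff hu.le] at this
    linarith
  · intro h v hv hp
    rcases le_or_gt v u with h' | h'
    · exact ENNReal.ofReal_le_ofReal h'
    · exact absurd hp (h v h').not_ge

lemma le_radInf_iff {f : E → ℝ≥0∞} {y : E} {u : ℝ} (hu : 0 < u) :
    ENNReal.ofReal u ≤ radInf f y ↔ ∀ v, 0 < v → v < u → persp f y v < 1 := by
  simp only [radInf, le_iInf_iff]
  constructor
  · intro h v hv0 hvu
    by_contra hc
    push_neg at hc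
    have := h v hv0 hc
    rw [ENNReal.ofReal_le_ofReal_iff hv0.le] at this
    linarith
  · intro h v hv0 hp
    rcases le_or_gt u v with h' | h'
    · exact ENNReal.ofReal_le_ofReal h'
    · exact absurd hp (h v hv0 h').not_ge

/-- If `f` is concave (`hypo f` convex), then `f^Γ` and `f_Γ` are convex (epigraphs convex);
if `f` is convex (`epi f` convex), then `f^Γ` and `f_Γ` are concave (hypographs convex). -/
theorem radial_concave_convex (f : E → ℝ≥0∞) :
    (Convex ℝ (hypoSet f) →
      Convex ℝ (epiSet (radSup f)) ∧ Convex ℝ (epiSet (radInf f))) ∧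
    (Convex ℝ (epiSet f) →
      Convex ℝ (hypoSet (radSup f)) ∧ Convex ℝ (hypoSet (radInf f))) := by
  constructor
  · intro hf
    have hS1 := convex_S_ge hf
    have hS2 := convex_S_gt hf
    constructor
    · -- epi (radSup f) convex
      rintro ⟨y₁, u₁⟩ ⟨hu₁, h₁⟩ ⟨y₂, u₂⟩ ⟨hu₂, h₂⟩ a b ha hb hab
      have hu : 0 < a * u₁ + b * u₂ := aux_combo_pos ha hb hab hu₁ hu₂
      simp only [epiSet, mem_setOf_eq, Prod.smul_mk, Prod.mk_add_mk, smul_eq_mul]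
      refine ⟨hu, ?_⟩
      rw [radSup_le_iff hu]
      intro v hv
      set δ := v - (a * u₁ + b * u₂) with hδdef
      have hδ : 0 < δ := by simp only [hδdef]; linarith
      have k₁ : 1 < persp f y₁ (u₁ + δ) := (radSup_le_iff hu₁).mp h₁ _ (by linarith)
      have k₂ : 1 < persp f y₂ (u₂ + δ) := (radSup_le_iff hu₂).mp h₂ _ (by linarith)
      have p₁ : ((y₁, u₁ + δ) : E × ℝ) ∈ {p : E × ℝ | 0 < p.2 ∧ 1 < persp f p.1 p.2} :=
        ⟨by show (0:ℝ) < u₁ + δ; linarith, k₁⟩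
      have p₂ : ((y₂, u₂ + δ) : E × ℝ) ∈ {p : E × ℝ | 0 < p.2 ∧ 1 < persp f p.1 p.2} :=
        ⟨by show (0:ℝ) < u₂ + δ; linarith, k₂⟩
      have key := hS2 p₁ p₂ ha hb hab
      simp only [mem_setOf_eq, Prod.smul_mk, Prod.mk_add_mk, smul_eq_mul] at key
      have hveq : a * (u₁ + δ) + b * (u₂ + δ) = v := by
        have h' : δ = v - (a * u₁ + b * u₂) := hδdef
        linear_combination δ * hab + h'
      rw [hveq] at key
      exact key.2
    · -- epi (radInf f) convex
      rintro ⟨y₁, u₁⟩ ⟨hu₁, h₁⟩ ⟨y₂, u₂⟩ ⟨hu₂, h₂⟩ a b ha hb hab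
      have hu : 0 < a * u₁ + b * u₂ := aux_combo_pos ha hb hab hu₁ hu₂
      simp only [epiSet, mem_setOf_eq, Prod.smul_mk, Prod.mk_add_mk, smul_eq_mul]
      refine ⟨hu, ?_⟩
      refine ENNReal.le_of_forall_pos_le_add fun ε hε _ => ?_
      have hεR : (0:ℝ) < (ε:ℝ) := hε
      have g₁ : radInf f y₁ < ENNReal.ofReal (u₁ + ε) :=
        lt_of_le_of_lt h₁ (by rw [ENNReal.ofReal_lt_ofReal_iff (by linarith)]; linarith)
      have g₂ : radInf f y₂ < ENNReal.ofReal (u₂ + ε) :=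
        lt_of_le_of_lt h₂ (by rw [ENNReal.ofReal_lt_ofReal_iff (by linarith)]; linarith)
      simp only [radInf, iInf_lt_iff] at g₁ g₂
      obtain ⟨v₁, hv₁, hp₁, hl₁⟩ := g₁
      obtain ⟨v₂, hv₂, hp₂, hl₂⟩ := g₂
      have hv₁' : v₁ < u₁ + ε := by
        rw [ENNReal.ofReal_lt_ofReal_iff (by linarith)] at hl₁; exact hl₁
      have hv₂' : v₂ < u₂ + ε := by
        rw [ENNReal.ofReal_lt_ofReal_iff (by linarith)] at hl₂; exact hl₂
      have p₁ : ((y₁, v₁) : E × ℝ) ∈ {p : E × ℝ | 0 < p.2 ∧ 1 ≤ persp f p.1 p.2} := ⟨hv₁, hp₁⟩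
      have p₂ : ((y₂, v₂) : E × ℝ) ∈ {p : E × ℝ | 0 < p.2 ∧ 1 ≤ persp f p.1 p.2} := ⟨hv₂, hp₂⟩
      have key := hS1 p₁ p₂ ha hb hab
      simp only [mem_setOf_eq, Prod.smul_mk, Prod.mk_add_mk, smul_eq_mul] at key
      have hle : radInf f (a • y₁ + b • y₂) ≤ ENNReal.ofReal (a * v₁ + b * v₂) := by
        apply iInf_le_of_le (a * v₁ + b * v₂)
        apply iInf_le_of_le key.1
        exact iInf_le _ key.2
      refine hle.trans ?_
      have habε : a * (ε:ℝ) + b * (ε:ℝ) = (ε:ℝ) := by linear_combination (ε:ℝ) * hab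
      have hreal : a * v₁ + b * v₂ ≤ (a * u₁ + b * u₂) + (ε:ℝ) := by
        have t₁ := mul_le_mul_of_nonneg_left hv₁'.le ha
        have t₂ := mul_le_mul_of_nonneg_left hv₂'.le hb
        linarith
      calc ENNReal.ofReal (a * v₁ + b * v₂)
          ≤ ENNReal.ofReal ((a * u₁ + b * u₂) + (ε:ℝ)) := ENNReal.ofReal_le_ofReal hreal
        _ = ENNReal.ofReal (a * u₁ + b * u₂) + ENNReal.ofReal (ε:ℝ) :=
            ENNReal.ofReal_add hu.le hεR.le
        _ = ENNReal.ofReal (a * u₁ + b * u₂) + ε := by rw [ENNReal.ofReal_coe_nnreal]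
  · intro hf
    have hS3 := convex_S_le hf
    have hS4 := convex_S_lt hf
    constructor
    · -- hypo (radSup f) convex
      rintro ⟨y₁, u₁⟩ ⟨hu₁, h₁⟩ ⟨y₂, u₂⟩ ⟨hu₂, h₂⟩ a b ha hb hab
      have hu : 0 < a * u₁ + b * u₂ := aux_combo_pos ha hb hab hu₁ hu₂
      simp only [hypoSet, mem_setOf_eq, Prod.smul_mk, Prod.mk_add_mk, smul_eq_mul]
      refine ⟨hu, ?_⟩
      refine ENNReal.le_of_forall_pos_le_add fun ε hε _ => ?_
      have hεR : (0:ℝ) < (ε:ℝ) := hε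
      have g₁ : ENNReal.ofReal (u₁ - ε) < radSup f y₁ :=
        lt_of_lt_of_le (by rw [ENNReal.ofReal_lt_ofReal_iff hu₁]; linarith) h₁
      have g₂ : ENNReal.ofReal (u₂ - ε) < radSup f y₂ :=
        lt_of_lt_of_le (by rw [ENNReal.ofReal_lt_ofReal_iff hu₂]; linarith) h₂
      simp only [radSup, lt_iSup_iff] at g₁ g₂
      obtain ⟨v₁, hv₁, hp₁, hl₁⟩ := g₁
      obtain ⟨v₂, hv₂, hp₂, hl₂⟩ := g₂
      have hv₁' : u₁ - ε < v₁ := by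
        rw [ENNReal.ofReal_lt_ofReal_iff hv₁] at hl₁; exact hl₁
      have hv₂' : u₂ - ε < v₂ := by
        rw [ENNReal.ofReal_lt_ofReal_iff hv₂] at hl₂; exact hl₂
      have p₁ : ((y₁, v₁) : E × ℝ) ∈ {p : E × ℝ | 0 < p.2 ∧ persp f p.1 p.2 ≤ 1} := ⟨hv₁, hp₁⟩
      have p₂ : ((y₂, v₂) : E × ℝ) ∈ {p : E × ℝ | 0 < p.2 ∧ persp f p.1 p.2 ≤ 1} := ⟨hv₂, hp₂⟩
      have key := hS3 p₁ p₂ ha hb hab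
      simp only [mem_setOf_eq, Prod.smul_mk, Prod.mk_add_mk, smul_eq_mul] at key
      have hge : ENNReal.ofReal (a * v₁ + b * v₂) ≤ radSup f (a • y₁ + b • y₂) := by
        apply le_iSup_of_le (a * v₁ + b * v₂)
        apply le_iSup_of_le key.1
        exact le_iSup_of_le key.2 le_rfl
      have habε : a * (ε:ℝ) + b * (ε:ℝ) = (ε:ℝ) := by linear_combination (ε:ℝ) * hab
      have hreal : (a * u₁ + b * u₂) - (ε:ℝ) ≤ a * v₁ + b * v₂ := by
        have t₁ := mul_le_mul_of_nonneg_left hv₁'.le ha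
        have t₂ := mul_le_mul_of_nonneg_left hv₂'.le hb
        linarith
      calc ENNReal.ofReal (a * u₁ + b * u₂)
          ≤ ENNReal.ofReal ((a * u₁ + b * u₂ - ε) + ε) := by
            apply ENNReal.ofReal_le_ofReal; linarith
        _ ≤ ENNReal.ofReal (a * u₁ + b * u₂ - ε) + ENNReal.ofReal (ε:ℝ) :=
            ENNReal.ofReal_add_le
        _ ≤ radSup f (a • y₁ + b • y₂) + ε := by
            rw [ENNReal.ofReal_coe_nnreal]
            exact add_le_add_left ((ENNReal.ofReal_le_ofReal hreal).trans hge) ε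
    · -- hypo (radInf f) convex
      rintro ⟨y₁, u₁⟩ ⟨hu₁, h₁⟩ ⟨y₂, u₂⟩ ⟨hu₂, h₂⟩ a b ha hb hab
      have hu : 0 < a * u₁ + b * u₂ := aux_combo_pos ha hb hab hu₁ hu₂
      simp only [hypoSet, mem_setOf_eq, Prod.smul_mk, Prod.mk_add_mk, smul_eq_mul]
      refine ⟨hu, ?_⟩
      rw [le_radInf_iff hu]
      intro v hv0 hvu
      set θ := v / (a * u₁ + b * u₂) with hθdef
      have hθ : 0 < θ := div_pos hv0 hu
      have hθ1 : θ < 1 := (div_lt_one hu).mpr hvu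
      have k₁ : persp f y₁ (θ * u₁) < 1 :=
        (le_radInf_iff hu₁).mp h₁ _ (by positivity) (mul_lt_of_lt_one_left hu₁ hθ1)
      have k₂ : persp f y₂ (θ * u₂) < 1 :=
        (le_radInf_iff hu₂).mp h₂ _ (by positivity) (mul_lt_of_lt_one_left hu₂ hθ1)
      have p₁ : ((y₁, θ * u₁) : E × ℝ) ∈ {p : E × ℝ | 0 < p.2 ∧ persp f p.1 p.2 < 1} :=
        ⟨by show (0:ℝ) < θ * u₁; positivity, k₁⟩
      have p₂ : ((y₂, θ * u₂) : E × ℝ) ∈ {p : E × ℝ | 0 < p.2 ∧ persp f p.1 p.2 < 1} :=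
        ⟨by show (0:ℝ) < θ * u₂; positivity, k₂⟩
      have key := hS4 p₁ p₂ ha hb hab
      simp only [mem_setOf_eq, Prod.smul_mk, Prod.mk_add_mk, smul_eq_mul] at key
      have hveq : a * (θ * u₁) + b * (θ * u₂) = v := by
        rw [hθdef]
        field_simp
      rw [hveq] at key
      exact key.2
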